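/- Let G > 0 and Λ ∈ ℝ with 3Λ + 2G > 0. For principal stretches λ₁, λ₂, λ₃ > 0 define the principal Cauchy stresses of Becker's law by σₖ = (λₖ/(λ₁λ₂λ₃)) · ( 2G·ln(λₖ) + Λ·ln(λ₁λ₂λ₃) ). Then for the choice λ₁ = e⁻¹, λ₂ = e⁻², λ₃ = e³ one has λ₁ > λ₂ but σ₁ = −2G/e < σ₂ = −4G/e², so that (σ₁ − σ₂)·(λ₁ − λ₂) < 0; hence Becker's law violates the Baker–Ericksen inequality. -/

import Mathlib

/-- For `G > 0` and `3Λ + 2G > 0`, the principal Cauchy stresses of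
Becker's law, `σₖ = (λₖ/(λ₁λ₂λ₃))·(2G·ln λₖ + Λ·ln(λ₁λ₂λ₃))`, violate the Baker–Ericksen
inequality: for `λ₁ = e⁻¹`, `λ₂ = e⁻²`, `λ₃ = e³` one has `λ₁ > λ₂` but
`σ₁ = −2G/e < σ₂ = −4G/e²`, so `(σ₁ − σ₂)·(λ₁ − λ₂) < 0`. -/
theorem becker_violates_baker_ericksen (G Lam : ℝ) (hG : 0 < G)
    (hLam : 0 < 3 * Lam + 2 * G) :
    let l1 : ℝ := Real.exp (-1)
    let l2 : ℝ := Real.exp (-2)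
    let l3 : ℝ := Real.exp 3
    let σ : ℝ → ℝ := fun lk =>
      (lk / (l1 * l2 * l3)) * (2 * G * Real.log lk + Lam * Real.log (l1 * l2 * l3))
    l2 < l1
    ∧ σ l1 = -(2 * G) / Real.exp 1
    ∧ σ l2 = -(4 * G) / (Real.exp 1) ^ 2
    ∧ σ l1 < σ l2
    ∧ (σ l1 - σ l2) * (l1 - l2) < 0 := by
  intro l1 l2 l3 σ
  have hprod : l1 * l2 * l3 = 1 := by
    simp only [l1, l2, l3, ← Real.exp_add]; norm_num
  have hσ1 : σ l1 = -(2 * G) / Real.exp 1 := by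
    show (l1 / (l1 * l2 * l3)) * (2 * G * Real.log l1 + Lam * Real.log (l1 * l2 * l3)) = _
    rw [hprod, Real.log_one, div_one,
      show Real.log l1 = -1 from Real.log_exp _,
      show l1 = (Real.exp 1)⁻¹ from Real.exp_neg 1]
    field_simp
    ring
  have hσ2 : σ l2 = -(4 * G) / (Real.exp 1) ^ 2 := by
    have he2 : Real.exp (2 : ℝ) = (Real.exp 1) ^ 2 := by
      rw [← Real.exp_nat_mul]; norm_num
    have h2 : Real.exp (-2 : ℝ) = ((Real.exp 1) ^ 2)⁻¹ := by
      rw [Real.exp_neg, he2]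
    show (l2 / (l1 * l2 * l3)) * (2 * G * Real.log l2 + Lam * Real.log (l1 * l2 * l3)) = _
    rw [hprod, Real.log_one, div_one,
      show Real.log l2 = -2 from Real.log_exp _,
      show l2 = ((Real.exp 1) ^ 2)⁻¹ from h2]
    field_simp
    ring
  have he : (2:ℝ) < Real.exp 1 := by
    have := Real.add_one_lt_exp (x := 1) one_ne_zero
    linarith
  have hlt : σ l1 < σ l2 := by
    rw [hσ1, hσ2]
    rw [div_lt_div_iff₀ (Real.exp_pos 1) (pow_pos (Real.exp_pos 1) 2)]
    have hGe : 0 < G * Real.exp 1 := by positivity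
    nlinarith [Real.exp_pos 1]
  have hl : l2 < l1 := Real.exp_lt_exp.mpr (by norm_num)
  refine ⟨hl, hσ1, hσ2, hlt, ?_⟩
  have h1 : σ l1 - σ l2 < 0 := by linarith
  have h2 : 0 < l1 - l2 := by linarith
  nlinarith
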